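/- Let S be a stable cut of an unweighted connected graph G with maximum degree Δ=2 (a cycle), with a unique critical vertex u satisfying φ(S) < (m−Δ)/2. Then n is odd, x_S(u)=1, x_S(v)=0 for all v≠u, C_S=(n+1)/2, and φ(S)=(n−3)/2 = (m−Δ−1)/2. -/

import Mathlib

open Finset

variable {V : Type*} [Fintype V] [DecidableEq V]

/-- Number of edges at `v` crossing the cut `S`. -/
def gCrossDeg (G : SimpleGraph V) [DecidableRel G.Adj] (S : Finset V) (v : V) : ℕ :=
  (Finset.univ.filter fun u => G.Adj v u ∧ ((v ∈ S) ↔ (u ∉ S))).card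

/-- Number of crossing edges of the cut `S` (as a real). -/
noncomputable def gCut (G : SimpleGraph V) [DecidableRel G.Adj] (S : Finset V) : ℝ :=
  (∑ v, (gCrossDeg G S v : ℝ)) / 2

/-- Cut size after the failure of the vertex `x`: `C_{S−x,G−x} = C_S − d_S(x)`. -/
noncomputable def gCutMinus (G : SimpleGraph V) [DecidableRel G.Adj]
    (S : Finset V) (x : V) : ℝ :=
  gCut G S - gCrossDeg G S x

/-- Single-fault FT value `φ(S) = min_v C_{S−v,G−v}`. -/
noncomputable def gFt1 (G : SimpleGraph V) [DecidableRel G.Adj] (S : Finset V) : ℝ :=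
  sInf (Set.range (gCutMinus G S))

lemma sum_gCrossDeg_even (G : SimpleGraph V) [DecidableRel G.Adj] (S : Finset V) :
    ∃ k, ∑ v, gCrossDeg G S v = 2 * k := by
  classical
  let G' : SimpleGraph V :=
    { Adj := fun v u => G.Adj v u ∧ ((v ∈ S) ↔ (u ∉ S))
      symm := by
        refine ⟨fun a b h => ?_⟩
        exact ⟨h.1.symm, by tauto⟩
      loopless := by
        refine ⟨fun a h => ?_⟩
        exact G.loopless.irrefl a h.1 }
  have hdec : DecidableRel G'.Adj := fun a b => instDecidableAnd
  have hdeg : ∀ v, gCrossDeg G S v = G'.degree v := by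
    intro v
    rw [← SimpleGraph.card_neighborFinset_eq_degree, SimpleGraph.neighborFinset_eq_filter]
    unfold gCrossDeg
    congr 1
    ext w
    simp [G', SimpleGraph.Adj]
  refine ⟨G'.edgeFinset.card, ?_⟩
  simp only [hdeg]
  exact G'.sum_degrees_eq_twice_card_edges

theorem stmt_18 (G : SimpleGraph V) [DecidableRel G.Adj]
    (hconn : G.Connected) (hdeg : ∀ v, G.degree v = 2)
    (S : Finset V)
    (hstable : ∀ v, ((G.degree v : ℝ) - 1) / 2 < (gCrossDeg G S v : ℝ))
    (u : V) (hcrit : gCutMinus G S u = gFt1 G S)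
    (huniq : ∀ v, v ≠ u → gCrossDeg G S v < gCrossDeg G S u)
    (hft : gFt1 G S < ((Fintype.card V : ℝ) - 2) / 2) :
    Odd (Fintype.card V) ∧
    (gCrossDeg G S u : ℝ) - (G.degree u : ℝ) / 2 = 1 ∧
    (∀ v, v ≠ u → (gCrossDeg G S v : ℝ) - (G.degree v : ℝ) / 2 = 0) ∧
    gCut G S = ((Fintype.card V : ℝ) + 1) / 2 ∧
    gFt1 G S = ((Fintype.card V : ℝ) - 3) / 2 ∧
    ((Fintype.card V : ℝ) - 3) / 2 = ((Fintype.card V : ℝ) - 2 - 1) / 2 := by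
  classical
  -- every vertex has crossing degree ≥ 1
  have h1 : ∀ v, 1 ≤ gCrossDeg G S v := by
    intro v
    by_contra h
    have h0 : gCrossDeg G S v = 0 := by omega
    have := hstable v
    rw [hdeg v, h0] at this
    norm_num at this
  -- every vertex has crossing degree ≤ 2
  have h2 : ∀ v, gCrossDeg G S v ≤ 2 := by
    intro v
    have hsub : (Finset.univ.filter fun w => G.Adj v w ∧ ((v ∈ S) ↔ (w ∉ S))) ⊆
        Finset.univ.filter fun w => G.Adj v w := by
      intro x hx
      simp only [Finset.mem_filter] at hx ⊢
      exact ⟨hx.1, hx.2.1⟩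
    have := Finset.card_le_card hsub
    calc gCrossDeg G S v ≤ (Finset.univ.filter fun w => G.Adj v w).card := this
      _ = G.degree v := by
          rw [← SimpleGraph.card_neighborFinset_eq_degree,
            SimpleGraph.neighborFinset_eq_filter]
      _ = 2 := hdeg v
  -- there is a vertex distinct from u
  obtain ⟨w, hw⟩ : ∃ w, G.Adj u w := by
    have : 0 < G.degree u := by rw [hdeg u]; norm_num
    exact (G.degree_pos_iff_exists_adj u).mp this
  have hwu : w ≠ u := fun h => G.loopless.irrefl u (h ▸ hw)
  -- crossing degree at u is 2
  have hcu2 : gCrossDeg G S u = 2 := by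
    have := huniq w hwu
    have := h1 w
    have := h2 u
    omega
  -- crossing degree elsewhere is 1
  have hcv1 : ∀ v, v ≠ u → gCrossDeg G S v = 1 := by
    intro v hv
    have := huniq v hv
    have := h1 v
    omega
  -- the total crossing degree sum
  have hsum : ∑ v, gCrossDeg G S v = Fintype.card V + 1 := by
    rw [← Finset.sum_erase_add _ _ (Finset.mem_univ u), hcu2]
    have herase : ∑ v ∈ Finset.univ.erase u, gCrossDeg G S v =
        (Finset.univ.erase u).card := by
      rw [Finset.card_eq_sum_ones]
      exact Finset.sum_congr rfl fun v hv => hcv1 v (Finset.ne_of_mem_erase hv)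
    rw [herase, Finset.card_erase_of_mem (Finset.mem_univ u), Finset.card_univ]
    have : 1 ≤ Fintype.card V := Fintype.card_pos_iff.mpr ⟨u⟩
    omega
  -- parity
  obtain ⟨k, hk⟩ := sum_gCrossDeg_even G S
  have hodd : Odd (Fintype.card V) := ⟨k - 1, by omega⟩
  -- cut value
  have hcut : gCut G S = ((Fintype.card V : ℝ) + 1) / 2 := by
    unfold gCut
    rw [← Nat.cast_sum, hsum]
    push_cast
    ring
  have hft1 : gFt1 G S = ((Fintype.card V : ℝ) - 3) / 2 := by
    rw [← hcrit]
    unfold gCutMinus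
    rw [hcut, hcu2]
    push_cast
    ring
  refine ⟨hodd, ?_, ?_, hcut, hft1, by ring⟩
  · rw [hcu2, hdeg u]; norm_num
  · intro v hv; rw [hcv1 v hv, hdeg v]; norm_num
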